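/- Let F = C_1 ∨ … ∨ C_ℓ be a k-DNF formula over the n = Nm bits of the encoding (each C_j a Boolean term of width at most k), with k ≤ M/2 and F not identically false. Then 1 − k/M ≤ Pr_D[F]/Pr_U[F] ≤ 1 + 2k/M; in particular, |Pr_D[F] − Pr_U[F]| ≤ 2k/M. -/

import Mathlib

namespace GLN

noncomputable section

open Finset

/-- `M = 2^m`. -/
def MM (m : ℕ) : ℕ := 2 ^ m

/-- `N = ⌈M · m · ln 2⌉`. -/
def NN (m : ℕ) : ℕ := ⌈(MM m : ℝ) * m * Real.log 2⌉₊

/-- Strings `X ∈ [M]^N`. -/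
abbrev Str (m : ℕ) := Fin (NN m) → Fin (MM m)

/-- The uniform probability mass function on `[M]^N`. -/
def umass (m : ℕ) (_X : Str m) : ℝ := 1 / (MM m : ℝ) ^ NN m

/-- The image `Im(X) ⊆ [M]` of a string, as a finset. -/
def img {m : ℕ} (X : Str m) : Finset (Fin (MM m)) := Finset.image X Finset.univ

/-- Transition kernel of `D_y(X)`: each coordinate with `x_i = y` is replaced by a uniform
independent sample from `[M] \ {y}`; other coordinates are unchanged. -/
def kerDy (m : ℕ) (y : Fin (MM m)) (X Z : Str m) : ℝ :=
  ∏ i, if X i = y then (if Z i = y then 0 else 1 / ((MM m : ℝ) - 1))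
       else (if Z i = X i then 1 else 0)

/-- Transition kernel of `D(X)`: choose `y` uniformly in `[M]`, then apply `D_y`. -/
def kerD (m : ℕ) (X Z : Str m) : ℝ := (1 / (MM m : ℝ)) * ∑ y, kerDy m y X Z

/-- The probability mass function of the distribution `D = D(U)`. -/
def dmass (m : ℕ) (Z : Str m) : ℝ := ∑ X, umass m X * kerD m X Z

/-- Transition kernel of `D_y^inv(Z)`: each coordinate is independently replaced by `y`
with probability `1/M` and left unchanged otherwise. -/
def kerDinvy (m : ℕ) (y : Fin (MM m)) (Z W : Str m) : ℝ :=
  ∏ i, ((1 / (MM m : ℝ)) * (if W i = y then 1 else 0)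
        + (1 - 1 / (MM m : ℝ)) * (if W i = Z i then 1 else 0))

/-- Transition kernel of `D^inv(Z)`: choose `y` uniformly in `[M] \ Im(Z)`,
then apply `D_y^inv`. -/
def kerDinv (m : ℕ) (Z W : Str m) : ℝ :=
  (1 / (((img Z)ᶜ.card : ℝ))) * ∑ y ∈ (img Z)ᶜ, kerDinvy m y Z W

/-- Probability of an event under a mass function. -/
def pr {m : ℕ} (μ : Str m → ℝ) (E : Set (Str m)) : ℝ := ∑ X, E.indicator μ X

/-- Expectation of a real function under a mass function. -/
def ev {m : ℕ} (μ : Str m → ℝ) (g : Str m → ℝ) : ℝ := ∑ X, μ X * g X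

/-- The surjectivity function `f_Surj`. -/
def fSurjB (m : ℕ) (X : Str m) : Bool := decide (img X = Finset.univ)

/-- The `q.2`-th bit of the binary encoding of coordinate `x_{q.1}` of `X`;
this realizes `X` as a string of `n = N·m` bits. -/
def bit {m : ℕ} (X : Str m) (q : Fin (NN m) × Fin m) : Bool :=
  Nat.testBit (X q.1).val q.2.val

-- ========== auxiliary lemmas ==========

variable {m : ℕ}

lemma one_le_Mr : (1:ℝ) ≤ (MM m : ℝ) := by
  have : (1:ℕ) ≤ MM m := Nat.one_le_two_pow
  exact_mod_cast this

lemma Mr_pos : (0:ℝ) < (MM m : ℝ) := lt_of_lt_of_le one_pos one_le_Mr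

lemma two_le_Mr (hm : 1 ≤ m) : (2:ℝ) ≤ (MM m : ℝ) := by
  have : (2:ℕ) ≤ MM m := by
    calc 2 = 2 ^ 1 := rfl
    _ ≤ 2 ^ m := Nat.pow_le_pow_right (by norm_num) hm
  exact_mod_cast this

lemma sum_prod_eq (t : ∀ _ : Fin (NN m), Finset (Fin (MM m)))
    (f : Fin (NN m) → Fin (MM m) → ℝ) :
    ∑ Z ∈ Fintype.piFinset t, ∏ i, f i (Z i) = ∏ i, ∑ z ∈ t i, f i z :=
  (Finset.prod_univ_sum t f).symm

lemma kerDy_nonneg (y : Fin (MM m)) (X Z : Str m) : 0 ≤ kerDy m y X Z := by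
  apply Finset.prod_nonneg
  intro i _
  have h1 : (0:ℝ) ≤ (MM m : ℝ) - 1 := by linarith [one_le_Mr (m := m)]
  split_ifs <;> first | exact div_nonneg zero_le_one h1 | norm_num

lemma kerDinvy_nonneg (y : Fin (MM m)) (Z W : Str m) : 0 ≤ kerDinvy m y Z W := by
  apply Finset.prod_nonneg
  intro i _
  have h1 : (1:ℝ)/(MM m:ℝ) ≤ 1 := by
    rw [div_le_one Mr_pos]; exact one_le_Mr
  have h0 : (0:ℝ) ≤ 1/(MM m:ℝ) := by positivity
  have : (0:ℝ) ≤ 1 - 1/(MM m:ℝ) := by linarith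
  split_ifs <;> nlinarith

lemma kerD_nonneg (X Z : Str m) : 0 ≤ kerD m X Z := by
  apply mul_nonneg (by positivity)
  exact Finset.sum_nonneg fun y _ => kerDy_nonneg y X Z

lemma kerDinv_nonneg (Z W : Str m) : 0 ≤ kerDinv m Z W := by
  apply mul_nonneg (by positivity)
  exact Finset.sum_nonneg fun y _ => kerDinvy_nonneg y Z W

lemma umass_nonneg (X : Str m) : 0 ≤ umass m X := by unfold umass; positivity

lemma dmass_nonneg (Z : Str m) : 0 ≤ dmass m Z :=
  Finset.sum_nonneg fun X _ => mul_nonneg (umass_nonneg X) (kerD_nonneg X Z)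

/-- Sum of the kernel `kerDy` over all inputs `X`. -/
lemma sum_kerDy (hm : 1 ≤ m) (y : Fin (MM m)) (Z : Str m) :
    ∑ X : Str m, kerDy m y X Z
      = if y ∈ img Z then 0 else ((MM m : ℝ) / ((MM m:ℝ) - 1)) ^ NN m := by
  have hM1 : (0:ℝ) < (MM m:ℝ) - 1 := by linarith [two_le_Mr hm]
  have h0 : ∑ X : Str m, kerDy m y X Z
      = ∏ i, ∑ x : Fin (MM m), (if x = y then (if Z i = y then (0:ℝ) else 1/((MM m:ℝ)-1))
          else (if Z i = x then 1 else 0)) := by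
    rw [← Fintype.piFinset_univ]
    exact sum_prod_eq _ (fun i x => if x = y then (if Z i = y then (0:ℝ) else 1/((MM m:ℝ)-1))
          else (if Z i = x then 1 else 0))
  rw [h0]
  have hin : ∀ i : Fin (NN m),
      (∑ x : Fin (MM m), if x = y then (if Z i = y then (0:ℝ) else 1/((MM m:ℝ)-1))
        else (if Z i = x then 1 else 0))
      = if Z i = y then 0 else (MM m:ℝ)/((MM m:ℝ)-1) := by
    intro i
    rw [← Finset.add_sum_erase _ _ (Finset.mem_univ y)]
    have h2 : ∑ x ∈ Finset.univ.erase y,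
        (if x = y then (if Z i = y then (0:ℝ) else 1/((MM m:ℝ)-1))
          else (if Z i = x then 1 else 0))
        = ∑ x ∈ Finset.univ.erase y, (if Z i = x then (1:ℝ) else 0) := by
      apply Finset.sum_congr rfl
      intro x hx
      rw [if_neg (Finset.ne_of_mem_erase hx)]
    rw [h2, Finset.sum_ite_eq _ (Z i)]
    by_cases hz : Z i = y
    · simp [hz]
    · simp only [hz, if_false, if_pos rfl, Finset.mem_erase, Finset.mem_univ, and_true,
        ne_eq, not_false_iff, if_true, if_neg hz]
      field_simp
      ring
  rw [Finset.prod_congr rfl fun i _ => hin i]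
  by_cases hy : y ∈ img Z
  · rw [if_pos hy]
    obtain ⟨i, _, hi⟩ := Finset.mem_image.1 hy
    exact Finset.prod_eq_zero (Finset.mem_univ i) (by rw [if_pos hi])
  · rw [if_neg hy]
    have : ∀ i ∈ (Finset.univ : Finset (Fin (NN m))),
        (if Z i = y then (0:ℝ) else (MM m:ℝ)/((MM m:ℝ)-1)) = (MM m:ℝ)/((MM m:ℝ)-1) := by
      intro i _
      exact if_neg fun h => hy (Finset.mem_image.2 ⟨i, Finset.mem_univ i, h⟩)
    rw [Finset.prod_congr rfl this, Finset.prod_const, Finset.card_univ, Fintype.card_fin]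

/-- Closed form for `dmass`. -/
lemma dmass_eq (hm : 1 ≤ m) (Z : Str m) :
    dmass m Z = ((img Z)ᶜ.card : ℝ) * (1 / (MM m:ℝ)) * (1/((MM m:ℝ)-1)) ^ NN m := by
  have hM1 : (0:ℝ) < (MM m:ℝ) - 1 := by linarith [two_le_Mr hm]
  have hMpos := Mr_pos (m := m)
  unfold dmass umass kerD
  have step : ∑ X : Str m, (1/(MM m:ℝ)^NN m) * ((1/(MM m:ℝ)) * ∑ y, kerDy m y X Z)
      = (1/(MM m:ℝ)^NN m) * ((1/(MM m:ℝ)) * ∑ y, ∑ X : Str m, kerDy m y X Z) := by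
    rw [← Finset.mul_sum]
    congr 1
    rw [← Finset.mul_sum]
    congr 1
    exact Finset.sum_comm
  rw [step]
  have step2 : ∑ y, ∑ X : Str m, kerDy m y X Z
      = ((img Z)ᶜ.card : ℝ) * ((MM m:ℝ)/((MM m:ℝ)-1)) ^ NN m := by
    have : ∀ y : Fin (MM m), (∑ X : Str m, kerDy m y X Z)
        = if y ∈ (img Z)ᶜ then ((MM m:ℝ)/((MM m:ℝ)-1)) ^ NN m else 0 := by
      intro y
      rw [sum_kerDy hm]
      by_cases h : y ∈ img Z <;> simp [h]
    rw [Finset.sum_congr rfl fun y _ => this y, Finset.sum_ite_mem, Finset.univ_inter,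
      Finset.sum_const, nsmul_eq_mul]
  rw [step2]
  field_simp
  ring

/-- Sum of `kerDinvy` over inputs `Z` avoiding the value `y`. -/
lemma sum_kerDinvy (hm : 1 ≤ m) (y : Fin (MM m)) (W : Str m) :
    ∑ Z ∈ Fintype.piFinset (fun _ : Fin (NN m) => ({y}ᶜ : Finset (Fin (MM m)))),
        kerDinvy m y Z W
      = (((MM m:ℝ)-1)/(MM m:ℝ)) ^ NN m := by
  have hM1 : (0:ℝ) < (MM m:ℝ) - 1 := by linarith [two_le_Mr hm]
  have hMpos := Mr_pos (m := m)
  have h0 : ∑ Z ∈ Fintype.piFinset (fun _ : Fin (NN m) => ({y}ᶜ : Finset (Fin (MM m)))),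
        kerDinvy m y Z W
      = ∏ i, ∑ z ∈ ({y}ᶜ : Finset (Fin (MM m))),
          ((1/(MM m:ℝ)) * (if W i = y then 1 else 0)
            + (1 - 1/(MM m:ℝ)) * (if W i = z then 1 else 0)) := by
    exact sum_prod_eq _ (fun i z => (1/(MM m:ℝ)) * (if W i = y then 1 else 0)
            + (1 - 1/(MM m:ℝ)) * (if W i = z then 1 else 0))
  rw [h0]
  have hin : ∀ i : Fin (NN m),
      (∑ z ∈ ({y}ᶜ : Finset (Fin (MM m))),
        ((1/(MM m:ℝ)) * (if W i = y then 1 else 0)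
          + (1 - 1/(MM m:ℝ)) * (if W i = z then 1 else 0)))
      = ((MM m:ℝ)-1)/(MM m:ℝ) := by
    intro i
    rw [Finset.sum_add_distrib, Finset.sum_const, ← Finset.mul_sum,
      Finset.sum_ite_eq _ (W i)]
    have hcard : (({y}ᶜ : Finset (Fin (MM m))).card : ℝ) = (MM m:ℝ) - 1 := by
      rw [Finset.card_compl, Finset.card_singleton, Fintype.card_fin]
      have h1 : (1:ℕ) ≤ MM m := Nat.one_le_two_pow
      push_cast [Nat.cast_sub h1]
      ring
    by_cases hw : W i = y
    · rw [if_pos hw, if_neg (by simp [hw])]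
      rw [nsmul_eq_mul, hcard]
      field_simp
      norm_num
    · rw [if_neg hw, if_pos (by simp [hw])]
      rw [nsmul_eq_mul, hcard]
      field_simp
      norm_num
  rw [Finset.prod_congr rfl fun i _ => hin i, Finset.prod_const, Finset.card_univ,
    Fintype.card_fin]

/-- The inverse-kernel identity: pushing `D` through `D^inv` recovers `U`. -/
lemma dmass_kerDinv (hm : 1 ≤ m) (W : Str m) :
    ∑ Z : Str m, dmass m Z * kerDinv m Z W = umass m W := by
  have hM1 : (0:ℝ) < (MM m:ℝ) - 1 := by linarith [two_le_Mr hm]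
  have hMpos := Mr_pos (m := m)
  have step1 : ∀ Z : Str m, dmass m Z * kerDinv m Z W
      = (1/(MM m:ℝ)) * (1/((MM m:ℝ)-1))^NN m * ∑ y ∈ (img Z)ᶜ, kerDinvy m y Z W := by
    intro Z
    rw [dmass_eq hm]
    unfold kerDinv
    by_cases hc : (img Z)ᶜ.card = 0
    · have he : (img Z)ᶜ = (∅ : Finset (Fin (MM m))) := Finset.card_eq_zero.1 hc
      rw [he]
      simp
    · have hcc : ((img Z)ᶜ.card : ℝ) ≠ 0 := Nat.cast_ne_zero.2 hc
      field_simp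
  rw [Finset.sum_congr rfl fun Z _ => step1 Z, ← Finset.mul_sum]
  have swap : ∑ Z : Str m, ∑ y ∈ (img Z)ᶜ, kerDinvy m y Z W
      = ∑ y : Fin (MM m), ∑ Z ∈ Fintype.piFinset
          (fun _ : Fin (NN m) => ({y}ᶜ : Finset (Fin (MM m)))), kerDinvy m y Z W := by
    have h1 : ∀ Z : Str m, ∑ y ∈ (img Z)ᶜ, kerDinvy m y Z W
        = ∑ y : Fin (MM m), if y ∈ (img Z)ᶜ then kerDinvy m y Z W else 0 := by
      intro Z
      rw [Finset.sum_ite_mem, Finset.univ_inter]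
    rw [Finset.sum_congr rfl fun Z _ => h1 Z, Finset.sum_comm]
    apply Finset.sum_congr rfl
    intro y _
    have h2 : Fintype.piFinset (fun _ : Fin (NN m) => ({y}ᶜ : Finset (Fin (MM m))))
        = Finset.univ.filter (fun Z : Str m => y ∈ (img Z)ᶜ) := by
      ext Z
      simp [Fintype.mem_piFinset, img, eq_comm]
    rw [h2, Finset.sum_filter]
  rw [swap, Finset.sum_congr rfl fun y _ => sum_kerDinvy hm y W, Finset.sum_const,
    Finset.card_univ, Fintype.card_fin, nsmul_eq_mul]
  unfold umass
  field_simp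
  rw [← mul_pow, ← mul_pow, show 1 / ((MM m:ℝ) - 1) * (((MM m:ℝ) - 1) / (MM m:ℝ)) * (MM m:ℝ) = 1 by
    field_simp [hM1.ne', hMpos.ne'], one_pow]

lemma pr_nonneg (μ : Str m → ℝ) (hμ : ∀ x, 0 ≤ μ x) (F : Set (Str m)) : 0 ≤ pr μ F :=
  Finset.sum_nonneg fun X _ => Set.indicator_nonneg (fun x _ => hμ x) X

lemma mem_of_agree {l : ℕ} {V : Fin l → Finset (Fin (NN m) × Fin m)}
    {a : Fin l → Fin (NN m) × Fin m → Bool}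
    {F : Set (Str m)} (hF : F = {X : Str m | ∃ t, ∀ q ∈ V t, bit X q = a t q})
    {t : Fin l} {X Z : Str m} (ht : ∀ q ∈ V t, bit X q = a t q)
    (hag : ∀ i ∈ (V t).image Prod.fst, Z i = X i) : Z ∈ F := by
  rw [hF]
  refine ⟨t, fun q hq => ?_⟩
  have h1 := ht q hq
  have h2 : Z q.1 = X q.1 := hag q.1 (Finset.mem_image_of_mem _ hq)
  simp only [bit] at h1 ⊢
  rw [h2]; exact h1

/-- Forward coupling: from any `X ∈ F`, the kernel `D(X)` stays in `F`
with probability at least `1 - k/M`. -/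
lemma pr_kerD_ge {k l : ℕ} (hm : 1 ≤ m)
    (V : Fin l → Finset (Fin (NN m) × Fin m)) (hV : ∀ t, (V t).card ≤ k)
    (a : Fin l → Fin (NN m) × Fin m → Bool)
    (F : Set (Str m)) (hF : F = {X : Str m | ∃ t, ∀ q ∈ V t, bit X q = a t q})
    (X : Str m) (hX : X ∈ F) :
    1 - (k:ℝ)/(MM m:ℝ) ≤ pr (kerD m X) F := by
  classical
  have hMpos := Mr_pos (m := m)
  have hM1 : (0:ℝ) < (MM m:ℝ) - 1 := by linarith [two_le_Mr hm]
  have hX' := hX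
  rw [hF] at hX'
  obtain ⟨t, ht⟩ := hX'
  set I : Finset (Fin (NN m)) := (V t).image Prod.fst with hIdef
  have hI : I.card ≤ k := le_trans Finset.card_image_le (hV t)
  set T : Finset (Str m) := Fintype.piFinset
    (fun i => if i ∈ I then ({X i} : Finset (Fin (MM m))) else Finset.univ) with hT
  have hpr : pr (kerD m X) F = ∑ Z : Str m, if Z ∈ F then kerD m X Z else 0 :=
    Finset.sum_congr rfl fun Z _ => Set.indicator_apply F _ Z
  rw [hpr]
  have hsplit : ∀ Z : Str m, (if Z ∈ F then kerD m X Z else 0)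
      = (1/(MM m:ℝ)) * ∑ y : Fin (MM m), (if Z ∈ F then kerDy m y X Z else 0) := by
    intro Z
    by_cases h : Z ∈ F
    · rw [if_pos h]; unfold kerD; congr 1
      exact Finset.sum_congr rfl fun y _ => (if_pos h).symm
    · rw [if_neg h]; simp [h]
  rw [Finset.sum_congr rfl fun Z _ => hsplit Z, ← Finset.mul_sum, Finset.sum_comm]
  have hyb : ∀ y : Fin (MM m), y ∉ Finset.image X I →
      (1:ℝ) ≤ ∑ Z : Str m, if Z ∈ F then kerDy m y X Z else 0 := by
    intro y hy
    have hEq : ∑ Z ∈ T, kerDy m y X Z = 1 := by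
      rw [hT]
      refine (sum_prod_eq (m := m)
        (fun i => if i ∈ I then ({X i} : Finset (Fin (MM m))) else Finset.univ)
        (fun i z => if X i = y then (if z = y then (0:ℝ) else 1/((MM m:ℝ)-1))
          else (if z = X i then 1 else 0))).trans ?_
      apply Finset.prod_eq_one
      intro i _
      by_cases hi : i ∈ I
      · rw [if_pos hi, Finset.sum_singleton]
        have hXi : ¬ X i = y := fun h => hy (h ▸ Finset.mem_image_of_mem X hi)
        rw [if_neg hXi, if_pos rfl]
      · rw [if_neg hi]
        by_cases hXy : X i = y
        · simp only [if_pos hXy]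
          rw [← Finset.add_sum_erase _ _ (Finset.mem_univ y), if_pos rfl]
          have h2 : ∑ z ∈ Finset.univ.erase y, (if z = y then (0:ℝ) else 1/((MM m:ℝ)-1))
              = ∑ z ∈ Finset.univ.erase y, 1/((MM m:ℝ)-1) :=
            Finset.sum_congr rfl fun z hz => if_neg (Finset.ne_of_mem_erase hz)
          rw [h2, Finset.sum_const, Finset.card_erase_of_mem (Finset.mem_univ y),
            Finset.card_univ, Fintype.card_fin, nsmul_eq_mul]
          have h1 : (1:ℕ) ≤ MM m := Nat.one_le_two_pow
          rw [Nat.cast_sub h1, Nat.cast_one, zero_add]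
          exact mul_one_div_cancel (ne_of_gt hM1)
        · simp only [if_neg hXy]
          rw [Finset.sum_ite_eq' _ (X i)]
          simp
    calc (1:ℝ) = ∑ Z ∈ T, kerDy m y X Z := hEq.symm
      _ = ∑ Z : Str m, if Z ∈ T then kerDy m y X Z else 0 := by
          rw [Finset.sum_ite_mem, Finset.univ_inter]
      _ ≤ ∑ Z : Str m, if Z ∈ F then kerDy m y X Z else 0 := by
          apply Finset.sum_le_sum
          intro Z _
          by_cases hmem : Z ∈ T
          · rw [if_pos hmem]
            have hag : ∀ i ∈ I, Z i = X i := by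
              intro i hi
              have h3 := (Fintype.mem_piFinset.1 (hT ▸ hmem)) i
              rw [if_pos hi] at h3
              exact Finset.mem_singleton.1 h3
            rw [if_pos (mem_of_agree hF ht hag)]
          · rw [if_neg hmem]
            by_cases h : Z ∈ F
            · rw [if_pos h]; exact kerDy_nonneg y X Z
            · rw [if_neg h]
  have hmain : ((MM m:ℝ) - k) ≤ ∑ y : Fin (MM m), ∑ Z : Str m,
      (if Z ∈ F then kerDy m y X Z else 0) := by
    have h1 : ∑ y : Fin (MM m), (if y ∈ Finset.image X I then (0:ℝ) else 1)
        ≤ ∑ y : Fin (MM m), ∑ Z : Str m, (if Z ∈ F then kerDy m y X Z else 0) := by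
      apply Finset.sum_le_sum
      intro y _
      by_cases h : y ∈ Finset.image X I
      · rw [if_pos h]
        refine Finset.sum_nonneg fun Z _ => ?_
        by_cases hz : Z ∈ F
        · rw [if_pos hz]; exact kerDy_nonneg y X Z
        · rw [if_neg hz]
      · rw [if_neg h]; exact hyb y h
    refine le_trans ?_ h1
    have h2 : ∑ y : Fin (MM m), (if y ∈ Finset.image X I then (0:ℝ) else 1)
        = (((Finset.image X I)ᶜ.card : ℕ) : ℝ) := by
      have e : ∀ y : Fin (MM m), (if y ∈ Finset.image X I then (0:ℝ) else 1)
          = if y ∈ (Finset.image X I)ᶜ then (1:ℝ) else 0 := by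
        intro y; by_cases h : y ∈ Finset.image X I <;> simp [h]
      rw [Finset.sum_congr rfl fun y _ => e y, Finset.sum_ite_mem, Finset.univ_inter,
        Finset.sum_const, nsmul_eq_mul, mul_one]
    rw [h2, Finset.card_compl, Fintype.card_fin]
    have h3 : (Finset.image X I).card ≤ k := le_trans Finset.card_image_le hI
    have h4 : (Finset.image X I).card ≤ MM m := by
      have h6 := Finset.card_le_univ (Finset.image X I)
      rwa [Fintype.card_fin] at h6
    rw [Nat.cast_sub h4]
    have h5 : ((Finset.image X I).card : ℝ) ≤ (k:ℝ) := by exact_mod_cast h3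
    linarith
  calc 1 - (k:ℝ)/(MM m:ℝ) = (1/(MM m:ℝ)) * ((MM m:ℝ) - k) := by field_simp
    _ ≤ _ := mul_le_mul_of_nonneg_left hmain (by positivity)

/-- Inverse coupling: from any `Z ∈ F` with a value missing from its image,
the kernel `D^inv(Z)` stays in `F` with probability at least `1 - k/M`. -/
lemma pr_kerDinv_ge {k l : ℕ} (hm : 1 ≤ m)
    (V : Fin l → Finset (Fin (NN m) × Fin m)) (hV : ∀ t, (V t).card ≤ k)
    (a : Fin l → Fin (NN m) × Fin m → Bool)
    (F : Set (Str m)) (hF : F = {X : Str m | ∃ t, ∀ q ∈ V t, bit X q = a t q})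
    (Z : Str m) (hZ : Z ∈ F) (hc : ((img Z)ᶜ : Finset (Fin (MM m))).Nonempty) :
    1 - (k:ℝ)/(MM m:ℝ) ≤ pr (kerDinv m Z) F := by
  classical
  have hMpos := Mr_pos (m := m)
  have hM1 : (0:ℝ) < (MM m:ℝ) - 1 := by linarith [two_le_Mr hm]
  have hZ' := hZ
  rw [hF] at hZ'
  obtain ⟨t, ht⟩ := hZ'
  set I : Finset (Fin (NN m)) := (V t).image Prod.fst with hIdef
  have hI : I.card ≤ k := le_trans Finset.card_image_le (hV t)
  set T : Finset (Str m) := Fintype.piFinset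
    (fun i => if i ∈ I then ({Z i} : Finset (Fin (MM m))) else Finset.univ) with hT
  have hpr : pr (kerDinv m Z) F = ∑ W : Str m, if W ∈ F then kerDinv m Z W else 0 :=
    Finset.sum_congr rfl fun W _ => Set.indicator_apply F _ W
  rw [hpr]
  have hsplit : ∀ W : Str m, (if W ∈ F then kerDinv m Z W else 0)
      = (1/(((img Z)ᶜ.card : ℕ) : ℝ))
        * ∑ y ∈ (img Z)ᶜ, (if W ∈ F then kerDinvy m y Z W else 0) := by
    intro W
    by_cases h : W ∈ F
    · rw [if_pos h]; unfold kerDinv; congr 1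
      exact Finset.sum_congr rfl fun y _ => (if_pos h).symm
    · rw [if_neg h]; simp [h]
  rw [Finset.sum_congr rfl fun W _ => hsplit W, ← Finset.mul_sum, Finset.sum_comm]
  have hyb : ∀ y ∈ (img Z)ᶜ,
      1 - (k:ℝ)/(MM m:ℝ) ≤ ∑ W : Str m, if W ∈ F then kerDinvy m y Z W else 0 := by
    intro y hy
    have hyZ : ∀ i, ¬ Z i = y := by
      intro i h
      exact (Finset.mem_compl.1 hy) (Finset.mem_image.2 ⟨i, Finset.mem_univ i, h⟩)
    have hEq : ∑ W ∈ T, kerDinvy m y Z W = (1 - 1/(MM m:ℝ)) ^ I.card := by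
      rw [hT]
      refine (sum_prod_eq (m := m)
        (fun i => if i ∈ I then ({Z i} : Finset (Fin (MM m))) else Finset.univ)
        (fun i w => (1/(MM m:ℝ)) * (if w = y then 1 else 0)
          + (1 - 1/(MM m:ℝ)) * (if w = Z i then 1 else 0))).trans ?_
      have hfac : ∀ i : Fin (NN m),
          (∑ w ∈ (if i ∈ I then ({Z i} : Finset (Fin (MM m))) else Finset.univ),
            ((1/(MM m:ℝ)) * (if w = y then 1 else 0)
              + (1 - 1/(MM m:ℝ)) * (if w = Z i then 1 else 0)))
          = if i ∈ I then (1 - 1/(MM m:ℝ)) else 1 := by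
        intro i
        by_cases hi : i ∈ I
        · rw [if_pos hi, if_pos hi, Finset.sum_singleton, if_neg (hyZ i), if_pos rfl]
          ring
        · rw [if_neg hi, if_neg hi, Finset.sum_add_distrib, ← Finset.mul_sum,
            ← Finset.mul_sum, Finset.sum_ite_eq' _ y, Finset.sum_ite_eq' _ (Z i)]
          simp only [Finset.mem_univ, if_true]
          ring
      rw [Finset.prod_congr rfl fun i _ => hfac i, ← Finset.prod_filter,
        Finset.filter_univ_mem, Finset.prod_const]
    have hcomp : (∑ W ∈ T, kerDinvy m y Z W)
        ≤ ∑ W : Str m, if W ∈ F then kerDinvy m y Z W else 0 := by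
      rw [show (∑ W ∈ T, kerDinvy m y Z W)
        = ∑ W : Str m, if W ∈ T then kerDinvy m y Z W else 0 from by
          rw [Finset.sum_ite_mem, Finset.univ_inter]]
      apply Finset.sum_le_sum
      intro W _
      by_cases hmem : W ∈ T
      · rw [if_pos hmem]
        have hag : ∀ i ∈ I, W i = Z i := by
          intro i hi
          have h3 := (Fintype.mem_piFinset.1 (hT ▸ hmem)) i
          rw [if_pos hi] at h3
          exact Finset.mem_singleton.1 h3
        rw [if_pos (mem_of_agree hF ht hag)]
      · rw [if_neg hmem]
        by_cases h : W ∈ F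
        · rw [if_pos h]; exact kerDinvy_nonneg y Z W
        · rw [if_neg h]
    have hbern : 1 - (k:ℝ)/(MM m:ℝ) ≤ (1 - 1/(MM m:ℝ)) ^ I.card := by
      have hone : (1:ℝ)/(MM m:ℝ) ≤ 1 := by
        rw [div_le_one hMpos]; exact one_le_Mr
      have hb := one_add_mul_le_pow (a := -(1/(MM m:ℝ))) (by linarith) I.card
      have hcard : (I.card:ℝ) ≤ (k:ℝ) := by exact_mod_cast hI
      have h5 : 1 - (k:ℝ)/(MM m:ℝ) ≤ 1 - (I.card:ℝ)/(MM m:ℝ) := by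
        have h6 : (I.card:ℝ)/(MM m:ℝ) ≤ (k:ℝ)/(MM m:ℝ) := by gcongr
        linarith
      calc 1 - (k:ℝ)/(MM m:ℝ) ≤ 1 - (I.card:ℝ)/(MM m:ℝ) := h5
        _ = 1 + (I.card:ℝ) * (-(1/(MM m:ℝ))) := by ring
        _ ≤ (1 + -(1/(MM m:ℝ))) ^ I.card := hb
        _ = (1 - 1/(MM m:ℝ)) ^ I.card := by ring_nf
    calc 1 - (k:ℝ)/(MM m:ℝ) ≤ (1 - 1/(MM m:ℝ)) ^ I.card := hbern
      _ = ∑ W ∈ T, kerDinvy m y Z W := hEq.symm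
      _ ≤ _ := hcomp
  have hcpos : (0:ℝ) < (((img Z)ᶜ.card : ℕ) : ℝ) := by
    exact_mod_cast Finset.card_pos.2 hc
  have hsum : (((img Z)ᶜ.card : ℕ) : ℝ) * (1 - (k:ℝ)/(MM m:ℝ))
      ≤ ∑ y ∈ (img Z)ᶜ, ∑ W : Str m, (if W ∈ F then kerDinvy m y Z W else 0) := by
    calc (((img Z)ᶜ.card : ℕ) : ℝ) * (1 - (k:ℝ)/(MM m:ℝ))
        = ∑ _y ∈ (img Z)ᶜ, (1 - (k:ℝ)/(MM m:ℝ)) := by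
          rw [Finset.sum_const, nsmul_eq_mul]
      _ ≤ _ := Finset.sum_le_sum hyb
  calc 1 - (k:ℝ)/(MM m:ℝ)
      = (1/(((img Z)ᶜ.card : ℕ) : ℝ))
        * ((((img Z)ᶜ.card : ℕ) : ℝ) * (1 - (k:ℝ)/(MM m:ℝ))) := by
        field_simp
    _ ≤ _ := mul_le_mul_of_nonneg_left hsum (by positivity)

lemma final_algebra {x u d : ℝ} (hx0 : 0 ≤ x) (hxh : x ≤ 1/2) (hu0 : 0 < u) (hu1 : u ≤ 1)
    (hd0 : 0 ≤ d) (hf : (1-x)*u ≤ d) (hb : (1-x)*d ≤ u) :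
    1 - x ≤ d/u ∧ d/u ≤ 1 + 2*x ∧ |d - u| ≤ 2*x := by
  have hup : d ≤ (1+2*x)*u := by
    nlinarith [mul_le_mul_of_nonneg_left hb (by linarith : (0:ℝ) ≤ 1+2*x),
      mul_nonneg (mul_nonneg hx0 (by linarith : (0:ℝ) ≤ 1-2*x)) hd0]
  refine ⟨?_, ?_, ?_⟩
  · rw [le_div_iff₀ hu0]; exact hf
  · rw [div_le_iff₀ hu0]; exact hup
  · rw [abs_le]
    constructor
    · nlinarith [mul_le_mul_of_nonneg_left hu1 hx0]
    · nlinarith [hup, mul_le_mul_of_nonneg_left hu1 hx0]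


/-- for any `k`-DNF formula `F = C_1 ∨ … ∨ C_ℓ` over the `n = Nm` encoding bits
(each term of width at most `k`), with `k ≤ M/2` and `F` not identically false:
`1 − k/M ≤ Pr_D[F]/Pr_U[F] ≤ 1 + 2k/M`, and in particular `|Pr_D[F] − Pr_U[F]| ≤ 2k/M`. -/
theorem stmt7 (m k l : ℕ) (hm : 1 ≤ m) (hk : 2 * k ≤ MM m)
    (V : Fin l → Finset (Fin (NN m) × Fin m)) (hV : ∀ t, (V t).card ≤ k)
    (a : Fin l → Fin (NN m) × Fin m → Bool)
    (F : Set (Str m)) (hF : F = {X : Str m | ∃ t, ∀ q ∈ V t, bit X q = a t q})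
    (hne : F.Nonempty) :
    1 - (k : ℝ) / (MM m : ℝ) ≤ pr (dmass m) F / pr (umass m) F ∧
    pr (dmass m) F / pr (umass m) F ≤ 1 + 2 * (k : ℝ) / (MM m : ℝ) ∧
    |pr (dmass m) F - pr (umass m) F| ≤ 2 * (k : ℝ) / (MM m : ℝ) := by
  classical
  have hMpos := Mr_pos (m := m)
  have hM2 := two_le_Mr hm
  have hκ0 : (0:ℝ) ≤ (k:ℝ)/(MM m:ℝ) := by positivity
  have hκhalf : (k:ℝ)/(MM m:ℝ) ≤ 1/2 := by
    rw [div_le_div_iff₀ hMpos (by norm_num)]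
    have h1 : ((2*k:ℕ):ℝ) ≤ ((MM m:ℕ):ℝ) := by exact_mod_cast hk
    push_cast at h1
    linarith
  -- positivity and boundedness of Pr_U[F]
  have hu_pos : 0 < pr (umass m) F := by
    obtain ⟨X0, hX0⟩ := hne
    have h2 : (0:ℝ) < umass m X0 := by unfold umass; positivity
    calc (0:ℝ) < umass m X0 := h2
      _ = F.indicator (umass m) X0 := (Set.indicator_of_mem hX0 _).symm
      _ ≤ pr (umass m) F := by
          unfold pr
          exact Finset.single_le_sum
            (fun X _ => Set.indicator_nonneg (fun x _ => umass_nonneg x) X)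
            (Finset.mem_univ X0)
  have hu_le : pr (umass m) F ≤ 1 := by
    have h1 : ∀ X : Str m, F.indicator (umass m) X ≤ umass m X := by
      intro X
      rw [Set.indicator_apply]
      split_ifs
      · exact le_refl _
      · exact umass_nonneg X
    calc pr (umass m) F ≤ ∑ X : Str m, umass m X := Finset.sum_le_sum fun X _ => h1 X
      _ = 1 := by
        unfold umass
        rw [Finset.sum_const, Finset.card_univ, nsmul_eq_mul]
        have h2 : (Fintype.card (Str m) : ℝ) = (MM m:ℝ) ^ NN m := by
          rw [Fintype.card_fun, Fintype.card_fin, Fintype.card_fin]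
          push_cast
          ring
        rw [h2]
        field_simp
  -- forward bound : (1 - k/M) Pr_U[F] ≤ Pr_D[F]
  have hfwd : (1 - (k:ℝ)/(MM m:ℝ)) * pr (umass m) F ≤ pr (dmass m) F := by
    have hexp : pr (dmass m) F = ∑ X : Str m, umass m X * pr (kerD m X) F := by
      calc pr (dmass m) F = ∑ Z : Str m, if Z ∈ F then dmass m Z else 0 :=
            Finset.sum_congr rfl fun Z _ => Set.indicator_apply F _ Z
        _ = ∑ Z : Str m, ∑ X : Str m, umass m X * (if Z ∈ F then kerD m X Z else 0) := by
            apply Finset.sum_congr rfl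
            intro Z _
            by_cases h : Z ∈ F
            · rw [if_pos h]; unfold dmass
              exact Finset.sum_congr rfl fun X _ => by rw [if_pos h]
            · rw [if_neg h]; simp [h]
        _ = ∑ X : Str m, ∑ Z : Str m, umass m X * (if Z ∈ F then kerD m X Z else 0) :=
            Finset.sum_comm
        _ = ∑ X : Str m, umass m X * pr (kerD m X) F := by
            apply Finset.sum_congr rfl
            intro X _
            rw [← Finset.mul_sum]
            congr 1
    have hterm : ∀ X : Str m, (1 - (k:ℝ)/(MM m:ℝ)) * F.indicator (umass m) X
        ≤ umass m X * pr (kerD m X) F := by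
      intro X
      by_cases h : X ∈ F
      · rw [Set.indicator_of_mem h, mul_comm]
        exact mul_le_mul_of_nonneg_left (pr_kerD_ge hm V hV a F hF X h) (umass_nonneg X)
      · rw [Set.indicator_of_notMem h, mul_zero]
        exact mul_nonneg (umass_nonneg X) (pr_nonneg _ (fun Z => kerD_nonneg X Z) F)
    calc (1 - (k:ℝ)/(MM m:ℝ)) * pr (umass m) F
        = ∑ X : Str m, (1 - (k:ℝ)/(MM m:ℝ)) * F.indicator (umass m) X := by
          unfold pr; rw [Finset.mul_sum]
      _ ≤ ∑ X : Str m, umass m X * pr (kerD m X) F := Finset.sum_le_sum fun X _ => hterm X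
      _ = pr (dmass m) F := hexp.symm
  -- backward bound : (1 - k/M) Pr_D[F] ≤ Pr_U[F]
  have hbwd : (1 - (k:ℝ)/(MM m:ℝ)) * pr (dmass m) F ≤ pr (umass m) F := by
    have hexp : pr (umass m) F = ∑ Z : Str m, dmass m Z * pr (kerDinv m Z) F := by
      calc pr (umass m) F = ∑ W : Str m, if W ∈ F then umass m W else 0 :=
            Finset.sum_congr rfl fun W _ => Set.indicator_apply F _ W
        _ = ∑ W : Str m, ∑ Z : Str m, dmass m Z * (if W ∈ F then kerDinv m Z W else 0) := by
            apply Finset.sum_congr rfl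
            intro W _
            by_cases h : W ∈ F
            · rw [if_pos h, ← dmass_kerDinv hm W]
              exact Finset.sum_congr rfl fun Z _ => by rw [if_pos h]
            · rw [if_neg h]; simp [h]
        _ = ∑ Z : Str m, ∑ W : Str m, dmass m Z * (if W ∈ F then kerDinv m Z W else 0) :=
            Finset.sum_comm
        _ = ∑ Z : Str m, dmass m Z * pr (kerDinv m Z) F := by
            apply Finset.sum_congr rfl
            intro Z _
            rw [← Finset.mul_sum]
            congr 1
    have hterm : ∀ Z : Str m, (1 - (k:ℝ)/(MM m:ℝ)) * F.indicator (dmass m) Z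
        ≤ dmass m Z * pr (kerDinv m Z) F := by
      intro Z
      by_cases h : Z ∈ F
      · rw [Set.indicator_of_mem h]
        by_cases hc : ((img Z)ᶜ : Finset (Fin (MM m))).Nonempty
        · rw [mul_comm]
          exact mul_le_mul_of_nonneg_left (pr_kerDinv_ge hm V hV a F hF Z h hc)
            (dmass_nonneg Z)
        · have h0 : dmass m Z = 0 := by
            rw [dmass_eq hm]
            have hcc : ((img Z)ᶜ : Finset (Fin (MM m))).card = 0 := by
              rw [Finset.not_nonempty_iff_eq_empty.1 hc]
              exact Finset.card_empty
            rw [hcc]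
            simp
          rw [h0]
          simp
      · rw [Set.indicator_of_notMem h, mul_zero]
        exact mul_nonneg (dmass_nonneg Z) (pr_nonneg _ (fun W => kerDinv_nonneg Z W) F)
    calc (1 - (k:ℝ)/(MM m:ℝ)) * pr (dmass m) F
        = ∑ Z : Str m, (1 - (k:ℝ)/(MM m:ℝ)) * F.indicator (dmass m) Z := by
          unfold pr; rw [Finset.mul_sum]
      _ ≤ ∑ Z : Str m, dmass m Z * pr (kerDinv m Z) F := Finset.sum_le_sum fun Z _ => hterm Z
      _ = pr (umass m) F := hexp.symm
  have hd_nonneg : 0 ≤ pr (dmass m) F := pr_nonneg _ (fun Z => dmass_nonneg Z) F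
  obtain ⟨g1, g2, g3⟩ := final_algebra hκ0 hκhalf hu_pos hu_le hd_nonneg hfwd hbwd
  refine ⟨g1, ?_, ?_⟩
  · rw [mul_div_assoc]; exact g2
  · rw [mul_div_assoc]; exact g3


end
end GLN
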